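/- Let $\mu$ be a probability measure, $V \subset L^2(\mu,\mathbb{C})$ a finite-dimensional subspace of functions, and suppose there is a constant $M \ge 1$ such that $\sup_x |s(x)|^2 \le M \int |s|^2 d\mu$ for all $s \in V$ (Bernstein–Markov type inequality), where the sup is over the support of $\mu$. If $S = (s_1,\dots,s_N)$ is any tuple in $V$, then $\sup_{(x_1,\dots,x_N)} |\det(s_i(x_j))|^2 \le M^N \int |\det(s_i(x_j))|^2 \, d\mu^{\otimes N}$. -/

import Mathlib

open MeasureTheory Finset

/-- Bernstein–Markov for determinants: if every `f` in a finite-dimensional space `V` of bounded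
measurable functions satisfies `sup |f|² ≤ M ∫ |f|² dμ`, then for any tuple `s₁,…,s_N ∈ V`,
`sup_{K^N} |det(sᵢ(xⱼ))|² ≤ M^N ∫ |det(sᵢ(xⱼ))|² dμ^{⊗N}`. -/
theorem stmt_4 {Ω : Type*} [MeasurableSpace Ω] (μ : Measure Ω) [IsProbabilityMeasure μ]
    (V : Submodule ℂ (Ω → ℂ)) [FiniteDimensional ℂ V]
    (hVmeas : ∀ f ∈ V, Measurable f)
    (hVbdd : ∀ f ∈ V, ∃ B : ℝ, ∀ x, ‖f x‖ ≤ B)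
    (M : ℝ) (hM : 1 ≤ M)
    (hBM : ∀ f ∈ V, ∀ x, ‖f x‖ ^ 2 ≤ M * ∫ a, ‖f a‖ ^ 2 ∂μ)
    (N : ℕ) (s : Fin N → Ω → ℂ) (hs : ∀ i, s i ∈ V) :
    ∀ x : Fin N → Ω, ‖Matrix.det (Matrix.of fun i j => s i (x j))‖ ^ 2 ≤
      M ^ N * ∫ y : Fin N → Ω, ‖Matrix.det (Matrix.of fun i j => s i (y j))‖ ^ 2
        ∂(Measure.pi fun _ => μ) := by
  classical
  have hM0 : (0:ℝ) ≤ M := le_trans zero_le_one hM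
  -- Integrability of `‖f‖²` for `f ∈ V`
  have hint : ∀ f ∈ V, Integrable (fun y => ‖f y‖ ^ 2) μ := by
    intro f hf
    obtain ⟨B, hB⟩ := hVbdd f hf
    refine (integrable_const (B ^ 2)).mono'
      ((hVmeas f hf).norm.pow_const 2).aestronglyMeasurable
      (Filter.Eventually.of_forall fun y => ?_)
    rw [Real.norm_of_nonneg (by positivity)]
    exact pow_le_pow_left₀ (norm_nonneg _) (hB y) 2
  -- the determinant function and its measurability
  set D : (Fin N → Ω) → ℝ := fun x => ‖Matrix.det (Matrix.of fun i j => s i (x j))‖ ^ 2 with hD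
  have hdetmeas : Measurable fun x : Fin N → Ω =>
      Matrix.det (Matrix.of fun i j => s i (x j)) := by
    simp_rw [Matrix.det_apply']
    refine Finset.measurable_sum _ fun σ _ => Measurable.const_mul ?_ _
    exact Finset.measurable_prod _ fun j _ => (hVmeas _ (hs _)).comp (measurable_pi_apply j)
  set G : (Fin N → Ω) → ENNReal := fun x => ENNReal.ofReal (D x) with hG
  have hGmeas : Measurable G := (hdetmeas.norm.pow_const 2).ennreal_ofReal
  -- as a function of a single column (other points fixed), the determinant lies in `V`
  have hcol : ∀ (x : Fin N → Ω) (j : Fin N), ∃ f ∈ V, ∀ y,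
      Matrix.det (Matrix.of fun i j' => s i (Function.update x j y j')) = f y := by
    intro x j
    set A : Matrix (Fin N) (Fin N) ℂ := Matrix.of fun i j' => s i (x j') with hA
    let L : (Fin N → ℂ) →ₗ[ℂ] ℂ :=
      { toFun := fun c => (A.updateCol j c).det
        map_add' := fun u v => A.det_updateCol_add j u v
        map_smul' := fun r u => A.det_updateCol_smul j r u }
    refine ⟨∑ i, (L fun j' => if i = j' then 1 else 0) • s i,
      Submodule.sum_mem _ fun i _ => Submodule.smul_mem _ _ (hs i), fun y => ?_⟩
    have h1 : (Matrix.of fun i j' => s i (Function.update x j y j')) =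
        A.updateCol j (fun i => s i y) := by
      ext i j'
      simp only [Matrix.of_apply, Matrix.updateCol_apply, hA, Function.update_apply]
      rw [apply_ite (s i)]
    have h2 : Matrix.det (A.updateCol j (fun i => s i y)) = L (fun i => s i y) := rfl
    rw [h1, h2, LinearMap.pi_apply_eq_sum_univ L (fun i => s i y)]
    simp [smul_smul, mul_comm]
  -- key pointwise step
  have hkey : ∀ (x : Fin N → Ω) (j : Fin N),
      G x ≤ ENNReal.ofReal M * ∫⁻ y, G (Function.update x j y) ∂μ := by
    intro x j
    obtain ⟨f, hfV, hfeq⟩ := hcol x j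
    have hGup : ∀ y, G (Function.update x j y) = ENNReal.ofReal (‖f y‖ ^ 2) := by
      intro y
      simp only [hG, hD]
      congr 2
      have := hfeq y
      exact congrArg norm this
    have hx : D x = ‖f (x j)‖ ^ 2 := by
      have := hfeq (x j)
      rw [Function.update_eq_self] at this
      simp only [hD]
      exact congrArg (fun z => ‖z‖ ^ 2) this
    calc G x = ENNReal.ofReal (‖f (x j)‖ ^ 2) := by rw [hG]; exact congrArg _ hx
      _ ≤ ENNReal.ofReal (M * ∫ a, ‖f a‖ ^ 2 ∂μ) :=
          ENNReal.ofReal_le_ofReal (hBM f hfV (x j))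
      _ = ENNReal.ofReal M * ENNReal.ofReal (∫ a, ‖f a‖ ^ 2 ∂μ) := ENNReal.ofReal_mul hM0
      _ = ENNReal.ofReal M * ∫⁻ a, ENNReal.ofReal (‖f a‖ ^ 2) ∂μ := by
          rw [ofReal_integral_eq_lintegral_ofReal (hint f hfV)
            (Filter.Eventually.of_forall fun a => by positivity)]
      _ = ENNReal.ofReal M * ∫⁻ y, G (Function.update x j y) ∂μ := by
          simp_rw [hGup]
  -- the marginal induction
  have main : ∀ T : Finset (Fin N), ∀ x : Fin N → Ω,
      G x ≤ ENNReal.ofReal M ^ T.card * (∫⋯∫⁻_T, G ∂(fun _ => μ)) x := by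
    intro T
    induction T using Finset.induction_on with
    | empty => intro x; simp [lmarginal_empty]
    | @insert j T hj ih =>
      intro x
      have hMne : ENNReal.ofReal M ^ T.card ≠ ⊤ := by
        exact ENNReal.pow_ne_top ENNReal.ofReal_ne_top
      calc G x ≤ ENNReal.ofReal M * ∫⁻ y, G (Function.update x j y) ∂μ := hkey x j
        _ ≤ ENNReal.ofReal M * ∫⁻ y, ENNReal.ofReal M ^ T.card *
              (∫⋯∫⁻_T, G ∂(fun _ => μ)) (Function.update x j y) ∂μ := by
            gcongr with y
            exact ih (Function.update x j y)
        _ = ENNReal.ofReal M ^ (insert j T).card *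
              ∫⁻ y, (∫⋯∫⁻_T, G ∂(fun _ => μ)) (Function.update x j y) ∂μ := by
            rw [lintegral_const_mul' _ _ hMne, Finset.card_insert_of_notMem hj,
              pow_succ]
            ring
        _ = ENNReal.ofReal M ^ (insert j T).card *
              (∫⋯∫⁻_insert j T, G ∂(fun _ => μ)) x := by
            rw [lmarginal_insert _ hGmeas hj]
  -- boundedness of the determinant, for integrability over the product
  obtain ⟨B, hB0, hB⟩ : ∃ B : ℝ, 0 ≤ B ∧ ∀ i y, ‖s i y‖ ≤ B := by
    choose B hB using fun i => hVbdd (s i) (hs i)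
    refine ⟨∑ i, |B i|, Finset.sum_nonneg fun i _ => abs_nonneg _, fun i y => ?_⟩
    exact le_trans (hB i y) (le_trans (le_abs_self _)
      (Finset.single_le_sum (f := fun i => |B i|) (fun i _ => abs_nonneg _) (mem_univ i)))
  have hdetbdd : ∀ x : Fin N → Ω,
      ‖Matrix.det (Matrix.of fun i j => s i (x j))‖ ≤ (N.factorial : ℝ) * B ^ N := by
    intro x
    rw [Matrix.det_apply']
    calc ‖∑ σ : Equiv.Perm (Fin N), ((Equiv.Perm.sign σ : ℤ) : ℂ) *
            ∏ i, (Matrix.of fun i j => s i (x j)) (σ i) i‖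
        ≤ ∑ σ : Equiv.Perm (Fin N), ‖((Equiv.Perm.sign σ : ℤ) : ℂ) *
            ∏ i, (Matrix.of fun i j => s i (x j)) (σ i) i‖ := norm_sum_le _ _
      _ ≤ ∑ _σ : Equiv.Perm (Fin N), B ^ N := by
          refine Finset.sum_le_sum fun σ _ => ?_
          have hsign : ‖((Equiv.Perm.sign σ : ℤ) : ℂ)‖ = 1 := by
            rcases Int.units_eq_one_or (Equiv.Perm.sign σ) with h | h <;> rw [h] <;> simp
          rw [norm_mul, hsign, one_mul]
          calc ‖∏ i, (Matrix.of fun i j => s i (x j)) (σ i) i‖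
              = ∏ i, ‖s (σ i) (x i)‖ := by rw [norm_prod]; rfl
            _ ≤ ∏ _i : Fin N, B := Finset.prod_le_prod
                (fun i _ => norm_nonneg _) (fun i _ => hB _ _)
            _ = B ^ N := by simp
      _ = (N.factorial : ℝ) * B ^ N := by
          simp [Finset.sum_const, Fintype.card_perm]
  have hDint : Integrable D (Measure.pi fun _ : Fin N => μ) := by
    have : IsProbabilityMeasure (Measure.pi fun _ : Fin N => μ) := by infer_instance
    refine (integrable_const (((N.factorial : ℝ) * B ^ N) ^ 2)).mono'
      (hdetmeas.norm.pow_const 2).aestronglyMeasurable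
      (Filter.Eventually.of_forall fun x => ?_)
    rw [Real.norm_of_nonneg (by positivity)]
    exact pow_le_pow_left₀ (norm_nonneg _) (hdetbdd x) 2
  -- conclusion
  intro x
  have h1 : G x ≤ ENNReal.ofReal M ^ N * ∫⁻ y, G y ∂(Measure.pi fun _ => μ) := by
    have := main Finset.univ x
    rwa [lmarginal_univ, Finset.card_univ, Fintype.card_fin] at this
  have h2 : ∫⁻ y, G y ∂(Measure.pi fun _ => μ) =
      ENNReal.ofReal (∫ y, D y ∂(Measure.pi fun _ => μ)) := by
    rw [ofReal_integral_eq_lintegral_ofReal hDint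
      (Filter.Eventually.of_forall fun y => by simp only [hD]; positivity)]
  have hI0 : 0 ≤ ∫ y, D y ∂(Measure.pi fun _ => μ) :=
    integral_nonneg fun y => by simp only [hD]; positivity
  rw [h2, ← ENNReal.ofReal_pow hM0, ← ENNReal.ofReal_mul (by positivity)] at h1
  exact (ENNReal.ofReal_le_ofReal_iff (by positivity)).mp h1
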